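/- Let tri : ℝ → ℝ be the 2π-periodic triangular wave tri(x) = 1 − (2/π)·arccos(cos x), let g(θ) = tri(3θ), and let n = 2m be an even integer with n ≥ 8. Put θ_k = 2πk/n, ζ_k = exp(θ_k·I) ∈ ℂ, t_n = (π²/(12n))·(1 − 1/n), and z_k = (1 + t_n·g(θ_k))·ζ_k for k ∈ Fin n. Then dist (z_i) (z_j) ≤ 2 for all i, j, and dist (z_k) (z_{k+m}) = 2 for every k (indices taken modulo n). -/

import Mathlib

/-- The 2π-periodic triangular wave `tri x = 1 − (2/π)·arccos (cos x)`. -/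
noncomputable def tri (x : ℝ) : ℝ := 1 - 2 / Real.pi * Real.arccos (Real.cos x)

/-- `g θ = tri (3θ)`. -/
noncomputable def g (θ : ℝ) : ℝ := tri (3 * θ)


lemma arccos_cos_eq_norm (x : ℝ) :
    Real.arccos (Real.cos x) = ‖(x : AddCircle (2 * Real.pi))‖ := by
  have hπ := Real.pi_pos
  rw [AddCircle.norm_eq]
  set k := round ((2 * Real.pi)⁻¹ * x) with hk
  have hb : |(2 * Real.pi)⁻¹ * x - k| ≤ 1/2 := abs_sub_round _
  have h1 : |x - k * (2 * Real.pi)| ≤ Real.pi := by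
    have h2 : |x - k * (2*Real.pi)| = (2*Real.pi) * |(2 * Real.pi)⁻¹ * x - k| := by
      have h2π : (2*Real.pi) ≠ 0 := by positivity
      have h3 : x - k * (2*Real.pi) = (2*Real.pi) * ((2 * Real.pi)⁻¹ * x - k) := by
        field_simp
      rw [h3, abs_mul, abs_of_pos (show (0:ℝ) < 2*Real.pi by linarith)]
    rw [h2]
    nlinarith
  have h2 : Real.cos x = Real.cos (x - k * (2 * Real.pi)) := by
    rw [Real.cos_sub_int_mul_two_pi]
  rw [h2]
  obtain ⟨hl, hu⟩ := abs_le.1 h1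
  rcases abs_cases (x - (k:ℝ) * (2*Real.pi)) with ⟨he, h0⟩ | ⟨he, h0⟩
  · rw [he]
    exact Real.arccos_cos h0 (by linarith)
  · rw [← Real.cos_neg, he]
    exact Real.arccos_cos (by linarith) (by linarith)

lemma lip (x y : ℝ) : |Real.arccos (Real.cos x) - Real.arccos (Real.cos y)| ≤ |x - y| := by
  rw [arccos_cos_eq_norm, arccos_cos_eq_norm]
  calc |‖(x : AddCircle (2*Real.pi))‖ - ‖(y : AddCircle (2*Real.pi))‖|
      ≤ ‖(x : AddCircle (2*Real.pi)) - (y : AddCircle (2*Real.pi))‖ := abs_norm_sub_norm_le _ _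
    _ = ‖((x - y : ℝ) : AddCircle (2*Real.pi))‖ := by norm_cast
    _ ≤ |x - y| := by
        simpa using QuotientAddGroup.norm_mk_le_norm (S := AddSubgroup.zmultiples (2*Real.pi)) (m := x - y)



lemma tri_mem (x : ℝ) : -1 ≤ tri x ∧ tri x ≤ 1 := by
  have h1 := Real.arccos_nonneg (Real.cos x)
  have h2 := Real.arccos_le_pi (Real.cos x)
  have hπ := Real.pi_pos
  unfold tri
  have h3 : Real.arccos (Real.cos x) / Real.pi ≤ 1 := div_le_one_of_le₀ h2 hπ.le
  have h4 : 0 ≤ Real.arccos (Real.cos x) / Real.pi := by positivity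
  constructor
  · rw [div_mul_eq_mul_div, mul_div_assoc]
    nlinarith
  · rw [div_mul_eq_mul_div, mul_div_assoc]
    nlinarith

lemma tri_add_pi (x : ℝ) : tri (x + Real.pi) = - tri x := by
  have hπ : Real.pi ≠ 0 := Real.pi_ne_zero
  unfold tri
  rw [Real.cos_add_pi, Real.arccos_neg]
  field_simp
  ring

lemma tri_add_two_pi (x : ℝ) : tri (x + 2 * Real.pi) = tri x := by
  have h := tri_add_pi (x + Real.pi)
  have h2 := tri_add_pi x
  have : x + Real.pi + Real.pi = x + 2*Real.pi := by ring
  rw [this] at h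
  rw [h, h2, neg_neg]

lemma g_mem (θ : ℝ) : -1 ≤ g θ ∧ g θ ≤ 1 := tri_mem _

lemma g_add_pi (θ : ℝ) : g (θ + Real.pi) = - g θ := by
  unfold g
  have : 3 * (θ + Real.pi) = (3*θ + 2*Real.pi) + Real.pi := by ring
  rw [this, tri_add_pi, tri_add_two_pi]

lemma g_sub_two_pi (θ : ℝ) : g (θ - 2 * Real.pi) = g θ := by
  unfold g
  have : 3*θ = (3 * (θ - 2*Real.pi) + 2*Real.pi) + 2*Real.pi + 2*Real.pi := by ring
  rw [this, tri_add_two_pi, tri_add_two_pi, tri_add_two_pi]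

-- g θ - g (θ - u) ≤ (6/π) v  when 3u ≡ ±3v [2π]
lemma g_diff_le (θ u v : ℝ) (hv : 0 ≤ v) (ε : ℝ) (K : ℤ) (hε : ε = 1 ∨ ε = -1)
    (hu : u = ε * v + 2 * Real.pi * K) :
    g θ - g (θ - u) ≤ 6 / Real.pi * v := by
  have hπ := Real.pi_pos
  unfold g tri
  have hc : Real.cos (3 * (θ - u)) = Real.cos (3*θ - 3*ε*v) := by
    have h3 : 3 * (θ - u) = (3*θ - 3*ε*v) + ((-(3*K) : ℤ) : ℝ) * (2*Real.pi) := by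
      rw [hu]; push_cast; ring
    rw [h3, Real.cos_add_int_mul_two_pi]
  have hl := lip (3*θ - 3*ε*v) (3*θ)
  have hεv : |3*θ - 3*ε*v - 3*θ| = 3*v := by
    rcases hε with h | h <;> rw [h] <;>
      simp [abs_of_nonneg, abs_of_nonpos, hv] <;> ring_nf <;>
      rw [abs_of_nonneg (by linarith)] <;> ring
  rw [hεv] at hl
  rw [hc]
  have h5 := (abs_le.1 hl).2
  have h2 : 0 < 2/Real.pi := by positivity
  calc 1 - 2 / Real.pi * Real.arccos (Real.cos (3 * θ))
        - (1 - 2 / Real.pi * Real.arccos (Real.cos (3*θ - 3*ε*v)))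
      = 2/Real.pi * (Real.arccos (Real.cos (3*θ - 3*ε*v)) - Real.arccos (Real.cos (3*θ))) := by ring
    _ ≤ 2/Real.pi * (3*v) := by nlinarith
    _ = 6/Real.pi * v := by ring


set_option maxHeartbeats 1000000

lemma mono_step (τ t2 a v : ℝ) (hτ0 : 0 ≤ τ) (hτ5 : τ ≤ 1/5)
    (ht20 : 0 ≤ t2) (ht21 : t2 ≤ 1/100) (ha0 : 0 < a) (hva : a ≤ v) (hv3 : v ≤ 1.048)
    (hfa : 0 ≤ a - a^3/8 + τ*a^2 - τ*a^4/8 - 4*τ - τ^2*a - t2*a) :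
    4*τ + τ^2*v + t2*v ≤ v - v^3/8 + τ*v^2 - τ*v^4/8 := by
  have hv0 : 0 < v := lt_of_lt_of_le ha0 hva
  have hB : 0 ≤ 1 - (v^2+v*a+a^2)/8 + τ*(v+a) - τ*(v^3+v^2*a+v*a^2+a^3)/8 - τ^2 - t2 := by
    have hvv : v^2 ≤ 1.099 := by nlinarith
    have hva2 : v*a ≤ v^2 := by nlinarith
    have haa : a^2 ≤ v^2 := by nlinarith
    have hv3c : v^3 ≤ 1.152 := by nlinarith
    have hc1 : v^2*a ≤ v^3 := by nlinarith
    have hc2 : v*a^2 ≤ v^3 := by nlinarith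
    have hc3 : a^3 ≤ v^3 := by nlinarith
    have hτva : 0 ≤ τ*(v+a) := by positivity
    have hcs : τ*(v^3+v^2*a+v*a^2+a^3) ≤ (1/5)*(4*1.152) := by nlinarith
    nlinarith
  have key : (v - v^3/8 + τ*v^2 - τ*v^4/8 - 4*τ - τ^2*v - t2*v)
      - (a - a^3/8 + τ*a^2 - τ*a^4/8 - 4*τ - τ^2*a - t2*a)
      = (v-a)*(1 - (v^2+v*a+a^2)/8 + τ*(v+a) - τ*(v^3+v^2*a+v*a^2+a^3)/8 - τ^2 - t2) := by
    ring
  nlinarith [mul_nonneg (sub_nonneg.2 hva) hB]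

lemma base_step (P e : ℝ) (hP1 : 3.1415 < P) (hP2 : P < 3.1416)
    (he0 : 0 < e) (he : e ≤ 1/8) :
    0 ≤ (2*P*e) - (2*P*e)^3/8 + (P/2*e*(1-e))*(2*P*e)^2 - (P/2*e*(1-e))*(2*P*e)^4/8
      - 4*(P/2*e*(1-e)) - (P/2*e*(1-e))^2*(2*P*e) - ((P^2/12*e*(1-e))^2)*(2*P*e) := by
  have hfact : (2*P*e) - (2*P*e)^3/8 + (P/2*e*(1-e))*(2*P*e)^2 - (P/2*e*(1-e))*(2*P*e)^4/8
      - 4*(P/2*e*(1-e)) - (P/2*e*(1-e))^2*(2*P*e) - ((P^2/12*e*(1-e))^2)*(2*P*e)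
      = e^2 * (2*P + P^3*e*(1/2 - e - e^2/2) - P^5*e^3*(1-e) - (P^5/72)*e*(1-e)^2) := by
    ring
  rw [hfact]
  have hQ : 0 ≤ 2*P + P^3*e*(1/2 - e - e^2/2) - P^5*e^3*(1-e) - (P^5/72)*e*(1-e)^2 := by
    have hP0 : 0 < P := by linarith
    have hP2' : P^2 ≤ 9.8697 := by nlinarith
    have hP3 : P^3 ≤ 31.01 := by
      nlinarith [mul_le_mul hP2.le hP2' (by positivity) (by norm_num : (0:ℝ) ≤ 3.1416)]
    have hP5 : P^5 ≤ 310 := by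
      nlinarith [mul_le_mul hP2' hP3 (by positivity) (by norm_num : (0:ℝ) ≤ 9.8697)]
    have hP30 : 0 < P^3 := by positivity
    have hP50 : 0 < P^5 := by positivity
    have he2 : e^2 ≤ e/8 := by nlinarith
    have he3 : e^3 ≤ e/64 := by nlinarith [sq_nonneg e, mul_pos he0 he0]
    have hA : P^3*e*(e + e^2/2) ≤ 31.01*e*(1/8 + 1/128) := by
      have : e + e^2/2 ≤ 1/8 + 1/128 := by nlinarith
      nlinarith [mul_pos hP30 he0, mul_pos he0 he0]
    have hBq : P^5*e^3*(1-e) ≤ 310*(e/64) := by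
      nlinarith [mul_pos hP50 (mul_pos (mul_pos he0 he0) he0)]
    have hC : (P^5/72)*e*(1-e)^2 ≤ (310/72)*e := by
      nlinarith [mul_pos hP50 he0, sq_nonneg (1-e), mul_pos he0 he0]
    have hD : 0 ≤ P^3*e*(1/2) - P^3*e*(e + e^2/2) - 0 ∨ True := Or.inr trivial
    nlinarith [mul_pos hP30 he0]
  positivity


set_option maxHeartbeats 10000000



lemma cos_lb (v : ℝ) (h0 : 0 ≤ v) (h2 : v ≤ Real.pi/3) :
    v^2/2 - v^4/16 ≤ 1 - Real.cos v := by
  have hπ := Real.pi_lt_d6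
  have hπ1 := Real.pi_gt_d6
  have hs : Real.sin (v/2)^2 = 1/2 - Real.cos (2*(v/2))/2 := Real.sin_sq_eq_half_sub (v/2)
  have h2v : 2*(v/2) = v := by ring
  rw [h2v] at hs
  rcases eq_or_lt_of_le h0 with h | h
  · simp [← h]
  · have hv1048 : v ≤ 1.048 := by nlinarith
    have hv2' : v^2 ≤ 1.099 := by nlinarith
    have hv1 : v/2 ≤ 1 := by linarith
    have hsin : v/2 - (v/2)^3/4 < Real.sin (v/2) := by
      have := Real.sin_gt_sub_cube (by linarith : 0 < v/2)
      nlinarith [pow_pos (by linarith : (0:ℝ) < v/2) 3]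
    have hL0 : 0 ≤ v/2 - (v/2)^3/4 := by nlinarith [mul_pos h h]
    have hs2 : (v/2 - (v/2)^3/4)^2 ≤ Real.sin (v/2)^2 := by nlinarith [hsin, hL0]
    nlinarith [hs2, hs, sq_nonneg (v*v*v)]

lemma core2 (N v : ℝ) (hN : 8 ≤ N) (hv1 : 2*Real.pi/N ≤ v) (hv2 : v ≤ Real.pi/3) :
    (Real.pi^2/(12*N)*(1-1/N))*(6/Real.pi*v)*(4+(Real.pi^2/(12*N)*(1-1/N))*(6/Real.pi*v))
      ≤ 2*(1+(Real.pi^2/(12*N)*(1-1/N))*(6/Real.pi*v)-(Real.pi^2/(12*N)*(1-1/N))^2)*(v^2/2-v^4/16) := by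
  have hπ1 := Real.pi_gt_d6
  have hπ2 := Real.pi_lt_d6
  have hπ0 := Real.pi_pos
  have hπ0' : Real.pi ≠ 0 := ne_of_gt hπ0
  have hN0 : (0:ℝ) < N := by linarith
  have hv0 : 0 < v := lt_of_lt_of_le (by positivity) hv1
  set e := 1/N with hee
  have he0 : 0 < e := by positivity
  have he8 : e ≤ 1/8 := by rw [hee]; exact one_div_le_one_div_of_le (by norm_num) hN
  have h21 : 2*Real.pi*e = 2*Real.pi/N := by rw [hee]; ring
  have hve : 2*Real.pi*e ≤ v := by linarith [hv1, h21]
  have hv1048 : v ≤ 1.048 := by nlinarith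
  have hte : Real.pi^2/(12*N)*(1-1/N) = Real.pi^2/12*e*(1-e) := by rw [hee]; ring
  have h7 : e*(1-e) ≤ 7/64 := by
    nlinarith [mul_nonneg (show (0:ℝ) ≤ 1/8 - e by linarith) (show (0:ℝ) ≤ 7/8 - e by linarith)]
  have hee0 : 0 < e*(1-e) := by nlinarith
  have hP2' : Real.pi^2 ≤ 9.8697 := by nlinarith
  have hτ5 : Real.pi/2*e*(1-e) ≤ 1/5 := by nlinarith
  have htb0 : 0 ≤ Real.pi^2/12*e*(1-e) := by nlinarith [hee0]
  have htb : Real.pi^2/12*e*(1-e) ≤ 9/100 := by nlinarith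
  have ht21 : (Real.pi^2/12*e*(1-e))^2 ≤ 1/100 := by nlinarith
  have hpoly := mono_step (Real.pi/2*e*(1-e)) ((Real.pi^2/12*e*(1-e))^2) (2*Real.pi*e) v
    (by nlinarith [hee0]) hτ5 (sq_nonneg _) ht21
    (by positivity) hve hv1048
    (base_step Real.pi e (by nlinarith) (by nlinarith) he0 he8)
  have hmul := mul_le_mul_of_nonneg_left hpoly (le_of_lt hv0)
  rw [hte]
  have hg1 : Real.pi ^ 2 / 12 * e * (1 - e) * (6 / Real.pi * v) = Real.pi/2*e*(1-e)*v := by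
    field_simp; ring
  rw [hg1]
  nlinarith [hmul, sq_nonneg (Real.pi^2/12*e*(1-e)*v*v)]

lemma key_ineq (N v h h' : ℝ) (hN : 8 ≤ N) (hv0 : 0 ≤ v) (hvπ : v ≤ Real.pi)
    (hlat : v = 0 ∨ 2*Real.pi/N ≤ v)
    (hh1 : -1 ≤ h) (hh2 : h ≤ 1) (hh1' : -1 ≤ h') (hh2' : h' ≤ 1)
    (hw : h + h' ≤ 6/Real.pi*v) :
    (1 + (Real.pi^2/(12*N)*(1-1/N))*h)^2 + (1 + (Real.pi^2/(12*N)*(1-1/N))*h')^2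
      + 2*((1 + (Real.pi^2/(12*N)*(1-1/N))*h)*(1 + (Real.pi^2/(12*N)*(1-1/N))*h'))*Real.cos v
      ≤ 4 := by
  have hπ1 := Real.pi_gt_d6
  have hπ2 := Real.pi_lt_d6
  have hπ0 := Real.pi_pos
  have hN0 : (0:ℝ) < N := by linarith
  have he8 : 1/N ≤ 1/8 := one_div_le_one_div_of_le (by norm_num) hN
  have he0 : (0:ℝ) < 1/N := by positivity
  have ht0 : 0 < Real.pi^2/(12*N)*(1-1/N) := by
    have h1 : 0 < 1 - 1/N := by linarith
    positivity
  have ht9 : Real.pi^2/(12*N)*(1-1/N) ≤ 9/100 := by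
    have h7 : (1/N)*(1-1/N) ≤ 7/64 := by
      nlinarith [mul_nonneg (show (0:ℝ) ≤ 1/8 - 1/N by linarith) (show (0:ℝ) ≤ 7/8 - 1/N by linarith)]
    have hP2' : Real.pi^2 ≤ 9.8697 := by nlinarith
    have heq : Real.pi^2/(12*N)*(1-1/N) = Real.pi^2/12*((1/N)*(1-1/N)) := by ring
    rw [heq]; nlinarith
  have hcore2 := core2 N v hN
  generalize hgen : Real.pi^2/(12*N)*(1-1/N) = t at ht0 ht9 hcore2 ⊢
  have hc1 : Real.cos v ≤ 1 := Real.cos_le_one v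
  have hcm : -1 ≤ Real.cos v := Real.neg_one_le_cos v
  have h1p : (0:ℝ) ≤ 1+h := by linarith
  have h1p' : (0:ℝ) ≤ 1+h' := by linarith
  have h1m : (0:ℝ) ≤ 1-h := by linarith
  have h1m' : (0:ℝ) ≤ 1-h' := by linarith
  have hth1 : -t ≤ t*h := by nlinarith [mul_nonneg ht0.le h1p]
  have hth2 : t*h ≤ t := by nlinarith [mul_nonneg ht0.le h1m]
  have hth1' : -t ≤ t*h' := by nlinarith [mul_nonneg ht0.le h1p']
  have hth2' : t*h' ≤ t := by nlinarith [mul_nonneg ht0.le h1m']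
  have hth'1 : (0:ℝ) < 1+t*h' := by linarith
  have hABid : (1+t*h)*(1+t*h') - (1-t)^2 = t*(1+h)*(1+t*h') + t*(1+h')*(1-t) := by ring
  have hABpos : (1-t)^2 ≤ (1+t*h)*(1+t*h') := by
    nlinarith [mul_nonneg (mul_nonneg ht0.le h1p) hth'1.le,
      mul_nonneg (mul_nonneg ht0.le h1p') (show (0:ℝ) ≤ 1-t by linarith)]
  have hABnn : (0:ℝ) ≤ (1+t*h)*(1+t*h') := le_trans (sq_nonneg _) hABpos
  have hcnn : (0:ℝ) ≤ 1 - Real.cos v := by linarith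
  have hred : (1+t*h)^2 + (1+t*h')^2 + 2*((1+t*h)*(1+t*h'))*Real.cos v - 4
      = t*(h+h')*(4+t*(h+h')) - 2*((1+t*h)*(1+t*h'))*(1-Real.cos v) := by ring
  rcases le_or_gt (h+h') 0 with hwneg | hwpos
  · have h4p : (0:ℝ) ≤ 4 + t*(h+h') := by nlinarith [hth1, hth1']
    have hterm : t*(h+h')*(4+t*(h+h')) ≤ 0 :=
      mul_nonpos_of_nonpos_of_nonneg (mul_nonpos_of_nonneg_of_nonpos ht0.le hwneg) h4p
    have hpos : 0 ≤ 2*((1+t*h)*(1+t*h'))*(1-Real.cos v) := by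
      nlinarith [mul_nonneg hABnn hcnn]
    linarith [hred, hterm, hpos]
  · have hvpos : 2*Real.pi/N ≤ v := by
      rcases hlat with h0 | h0
      · exfalso; rw [h0] at hw; nlinarith [hwpos]
      · exact h0
    have hvpos' : (0:ℝ) < v := lt_of_lt_of_le (by positivity) hvpos
    rcases le_or_gt (Real.pi/3) v with hbig | hsmall
    · have hcos : Real.cos v ≤ 1/2 := by
        rw [← Real.cos_pi_div_three]
        exact Real.cos_le_cos_of_nonneg_of_le_pi (by positivity) hvπ hbig
      have hx0 : 0 ≤ t*(h+h') := le_of_lt (mul_pos ht0 hwpos)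
      have hx2 : t*(h+h') ≤ 2*t := by linarith [hth2, hth2']
      have hL : t*(h+h')*(4+t*(h+h')) ≤ 2*t*(4+2*t) := by
        nlinarith [mul_nonneg (show 0 ≤ 2*t - t*(h+h') by linarith)
          (show 0 ≤ 4+2*t+t*(h+h') by linarith)]
      have hmm := mul_le_mul_of_nonneg_left (show (1:ℝ)/2 ≤ 1-Real.cos v by linarith) hABnn
      have hR : (1-t)^2 ≤ 2*((1+t*h)*(1+t*h'))*(1-Real.cos v) := by nlinarith [hmm, hABpos]
      have ht89 : 2*t*(4+2*t) ≤ (1-t)^2 := by nlinarith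
      linarith [hred, hL, hR, ht89]
    · have hv1048 : v ≤ 1.048 := by nlinarith
      have hv2' : v^2 ≤ 1.099 := by nlinarith
      have hvfg : 0 ≤ v^2/2 - v^4/16 := by
        nlinarith [mul_le_mul_of_nonneg_left hv2' (sq_nonneg v)]
      have hWpos : 0 < 6/Real.pi*v := by positivity
      have hsW : 0 ≤ 1 + t*(6/Real.pi*v) - t^2 := by
        have hq1 : 0 < t*(6/Real.pi*v) := mul_pos ht0 hWpos
        have hq2 : t^2 ≤ 1 := by nlinarith
        linarith
      have hcore := hcore2 hvpos (le_of_lt hsmall)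
      have hclb := cos_lb v hv0 (le_of_lt hsmall)
      have hcore' : t*(6/Real.pi*v)*(4+t*(6/Real.pi*v))
          ≤ 2*(1+t*(6/Real.pi*v)-t^2*(1-(6/Real.pi*v)))*(1-Real.cos v) := by
        have m1 : 2*(1+t*(6/Real.pi*v)-t^2)*(v^2/2-v^4/16)
            ≤ 2*(1+t*(6/Real.pi*v)-t^2)*(1-Real.cos v) :=
          mul_le_mul_of_nonneg_left hclb (by linarith)
        have m3 : 0 ≤ 2*t^2*(6/Real.pi*v)*(1-Real.cos v) :=
          mul_nonneg (mul_nonneg (by positivity) hWpos.le) hcnn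
        have m4 : 2*(1+t*(6/Real.pi*v)-t^2*(1-(6/Real.pi*v)))*(1-Real.cos v)
            = 2*(1+t*(6/Real.pi*v)-t^2)*(1-Real.cos v)
              + 2*t^2*(6/Real.pi*v)*(1-Real.cos v) := by ring
        linarith [hcore, m1, m3, m4]
      have hGM : t*(h+h')*(4+t*(h+h')) ≤ 2*(1+t*(h+h')-t^2*(1-(h+h')))*(1-Real.cos v) := by
        have hid : (6/Real.pi*v)*(t*(h+h')*(4+t*(h+h')) - 2*(1+t*(h+h')-t^2*(1-(h+h')))*(1-Real.cos v))
            = (h+h')*(t*(6/Real.pi*v)*(4+t*(6/Real.pi*v)) - 2*(1+t*(6/Real.pi*v)-t^2*(1-(6/Real.pi*v)))*(1-Real.cos v))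
              + ((6/Real.pi*v)-(h+h'))*(-2*(1-t^2)*(1-Real.cos v))
              + t^2*(h+h')*(6/Real.pi*v)*((h+h')-(6/Real.pi*v)) := by ring
        have e1 : (h+h')*(t*(6/Real.pi*v)*(4+t*(6/Real.pi*v)) - 2*(1+t*(6/Real.pi*v)-t^2*(1-(6/Real.pi*v)))*(1-Real.cos v)) ≤ 0 :=
          mul_nonpos_of_nonneg_of_nonpos hwpos.le (by linarith [hcore'])
        have e2 : ((6/Real.pi*v)-(h+h'))*(-2*(1-t^2)*(1-Real.cos v)) ≤ 0 := by
          apply mul_nonpos_of_nonneg_of_nonpos (by linarith [hw])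
          have ht2b : t^2 ≤ 1 := by nlinarith
          nlinarith [mul_nonneg (show (0:ℝ) ≤ 1-t^2 by linarith) hcnn]
        have e3 : t^2*(h+h')*(6/Real.pi*v)*((h+h')-(6/Real.pi*v)) ≤ 0 := by
          apply mul_nonpos_of_nonneg_of_nonpos
          · positivity
          · linarith [hw]
        have hWf : (6/Real.pi*v)*(t*(h+h')*(4+t*(h+h')) - 2*(1+t*(h+h')-t^2*(1-(h+h')))*(1-Real.cos v))
            ≤ (6/Real.pi*v)*0 := by rw [mul_zero]; linarith [hid, e1, e2, e3]
        have := (mul_le_mul_iff_of_pos_left hWpos).1 hWf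
        linarith
      have hfd : (1+t*h)*(1+t*h') - (1+t*(h+h')-t^2*(1-(h+h'))) = t^2*((1-h)*(1-h')) := by ring
      have hABM : 1+t*(h+h')-t^2*(1-(h+h')) ≤ (1+t*h)*(1+t*h') := by
        linarith [hfd, mul_nonneg (sq_nonneg t) (mul_nonneg h1m h1m')]
      have m2 := mul_le_mul_of_nonneg_right hABM hcnn
      linarith [hred, hGM, m2]




lemma dist_sq' (A B θ φ : ℝ) :
    (dist (((A:ℝ):ℂ) * Complex.exp (((θ:ℝ):ℂ) * Complex.I))
          (((B:ℝ):ℂ) * Complex.exp (((φ:ℝ):ℂ) * Complex.I)))^2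
      = A^2 + B^2 - 2*(A*B)*Real.cos (θ-φ) := by
  rw [Complex.dist_eq]
  have e1 : ((A:ℝ):ℂ) * Complex.exp (((θ:ℝ):ℂ) * Complex.I)
      - ((B:ℝ):ℂ) * Complex.exp (((φ:ℝ):ℂ) * Complex.I)
      = ((A*Real.cos θ - B*Real.cos φ : ℝ) : ℂ) + ((A*Real.sin θ - B*Real.sin φ : ℝ):ℂ) * Complex.I := by
    rw [Complex.exp_mul_I, Complex.exp_mul_I, ← Complex.ofReal_cos, ← Complex.ofReal_sin,
      ← Complex.ofReal_cos, ← Complex.ofReal_sin]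
    push_cast
    ring
  rw [e1, Complex.sq_norm, Complex.normSq_add_mul_I, Real.cos_sub]
  nlinarith [Real.sin_sq_add_cos_sq θ, Real.sin_sq_add_cos_sq φ]

set_option maxHeartbeats 4000000 in
theorem stmt16 (m n : ℕ) (hn : n = 2 * m) (h8 : 8 ≤ n)
    (z : Fin n → ℂ)
    (hz : ∀ k : Fin n, z k =
      ((1 + (Real.pi ^ 2 / (12 * n) * (1 - 1 / (n : ℝ))) *
          g (2 * Real.pi * ((k : ℕ) : ℝ) / n) : ℝ) : ℂ) *
        Complex.exp (((2 * Real.pi * ((k : ℕ) : ℝ) / n : ℝ) : ℂ) * Complex.I)) :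
    (∀ i j : Fin n, dist (z i) (z j) ≤ 2) ∧
    ∀ k : Fin n,
      dist (z k) (z ⟨((k : ℕ) + m) % n, Nat.mod_lt _ (by omega)⟩) = 2 := by
  have hπ0 := Real.pi_pos
  have hn0 : 0 < n := by omega
  have hnR : (0:ℝ) < n := by positivity
  have hnR' : (n:ℝ) ≠ 0 := ne_of_gt hnR
  have hmn : (n:ℝ) = 2*m := by rw [hn]; push_cast; ring
  have hm0 : 0 < m := by omega
  constructor
  · -- inequality part
    intro i j
    have hT8 : (8:ℝ) ≤ n := by exact_mod_cast h8
    set d : ℤ := ((i:ℕ):ℤ) - ((j:ℕ):ℤ) - (m:ℤ) with hd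
    have hnZ : (0:ℤ) < (n:ℤ) := by exact_mod_cast hn0
    have hdr := Int.mul_ediv_add_emod d (n:ℤ)
    have hr0 : (0:ℤ) ≤ d % (n:ℤ) := Int.emod_nonneg d (ne_of_gt hnZ)
    have hrn : d % (n:ℤ) < (n:ℤ) := Int.emod_lt_of_pos d hnZ
    have hdrR : ((d:ℤ):ℝ) = (n:ℝ)*((d/(n:ℤ) :ℤ):ℝ) + ((d%(n:ℤ):ℤ):ℝ) := by
      exact_mod_cast hdr.symm
    obtain ⟨v, ε, KK, hv0, hvπ, hε, hu, hlat⟩ :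
        ∃ (v ε : ℝ) (K : ℤ), 0 ≤ v ∧ v ≤ Real.pi ∧ (ε = 1 ∨ ε = -1) ∧
          2*Real.pi*((d:ℤ):ℝ)/n = ε*v + 2*Real.pi*K ∧ (v = 0 ∨ 2*Real.pi/(n:ℝ) ≤ v) := by
      rcases le_or_gt (2*(d % (n:ℤ))) (n:ℤ) with hh | hh
      · refine ⟨2*Real.pi*((d % (n:ℤ) : ℤ):ℝ)/n, 1, d / (n:ℤ), ?_, ?_, Or.inl rfl, ?_, ?_⟩
        · have h1 : (0:ℝ) ≤ ((d%(n:ℤ):ℤ):ℝ) := by exact_mod_cast hr0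
          positivity
        · have h1 : 2*((d%(n:ℤ):ℤ):ℝ) ≤ (n:ℝ) := by exact_mod_cast hh
          rw [div_le_iff₀ hnR]
          nlinarith
        · rw [hdrR]
          field_simp
          ring
        · rcases eq_or_lt_of_le hr0 with h1 | h1
          · left
            rw [← h1]
            simp
          · right
            have h2 : (1:ℝ) ≤ ((d%(n:ℤ):ℤ):ℝ) := by exact_mod_cast h1
            rw [div_le_div_iff₀ hnR hnR]
            nlinarith [mul_nonneg (mul_nonneg (by linarith : (0:ℝ) ≤ 2*Real.pi) (sub_nonneg.2 h2)) hnR.le]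
      · refine ⟨2*Real.pi*(((n:ℤ) - d % (n:ℤ) : ℤ):ℝ)/n, -1, d / (n:ℤ) + 1, ?_, ?_, Or.inr rfl, ?_, ?_⟩
        · have h1 : (0:ℝ) ≤ (((n:ℤ) - d%(n:ℤ):ℤ):ℝ) := by
            have := hrn
            push_cast
            exact_mod_cast sub_nonneg.2 (le_of_lt hrn)
          positivity
        · have h1 : (n:ℝ) < 2*((d%(n:ℤ):ℤ):ℝ) := by exact_mod_cast hh
          have h2 : (((n:ℤ) - d%(n:ℤ):ℤ):ℝ) = (n:ℝ) - ((d%(n:ℤ):ℤ):ℝ) := by push_cast; ring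
          rw [h2, div_le_iff₀ hnR]
          nlinarith
        · have h2 : (((n:ℤ) - d%(n:ℤ):ℤ):ℝ) = (n:ℝ) - ((d%(n:ℤ):ℤ):ℝ) := by push_cast; ring
          rw [hdrR, h2]
          push_cast
          field_simp
          ring
        · right
          have h1 : d%(n:ℤ) ≤ (n:ℤ) - 1 := by omega
          have h2 : (1:ℝ) ≤ (((n:ℤ) - d%(n:ℤ):ℤ):ℝ) := by
            have : (1:ℤ) ≤ (n:ℤ) - d%(n:ℤ) := by omega
            exact_mod_cast this
          rw [div_le_div_iff₀ hnR hnR]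
          nlinarith [mul_nonneg (mul_nonneg (by linarith : (0:ℝ) ≤ 2*Real.pi) (sub_nonneg.2 h2)) hnR.le]
    have hδ : 2 * Real.pi * ((i:ℕ):ℝ) / n - 2 * Real.pi * ((j:ℕ):ℝ) / n
        = Real.pi + 2*Real.pi*((d:ℤ):ℝ)/n := by
      rw [hd]
      push_cast
      field_simp
      rw [hmn]
      ring
    have hθji : 2 * Real.pi * ((j:ℕ):ℝ) / n + Real.pi
        = 2 * Real.pi * ((i:ℕ):ℝ) / n - 2*Real.pi*((d:ℤ):ℝ)/n := by
      rw [hd]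
      push_cast
      field_simp
      rw [hmn]
      ring
    have hw : g (2 * Real.pi * ((i:ℕ):ℝ) / n) + g (2 * Real.pi * ((j:ℕ):ℝ) / n)
        ≤ 6/Real.pi*v := by
      have hgj : g (2 * Real.pi * ((j:ℕ):ℝ) / n)
          = - g (2 * Real.pi * ((j:ℕ):ℝ) / n + Real.pi) := by rw [g_add_pi]; ring
      rw [hgj, hθji]
      have := g_diff_le (2 * Real.pi * ((i:ℕ):ℝ) / n) (2*Real.pi*((d:ℤ):ℝ)/n) v hv0 ε KK hε hu
      linarith
    have hcos : Real.cos (2 * Real.pi * ((i:ℕ):ℝ) / n - 2 * Real.pi * ((j:ℕ):ℝ) / n)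
        = - Real.cos v := by
      rw [hδ, Real.cos_add]
      simp only [Real.cos_pi, Real.sin_pi]
      rw [hu, show ε*v + 2*Real.pi*(KK:ℝ) = ε*v + (KK:ℝ)*(2*Real.pi) by ring,
        Real.cos_add_int_mul_two_pi]
      rcases hε with h1 | h1 <;> rw [h1] <;> simp
    have hkey := key_ineq (n:ℝ) v (g (2 * Real.pi * ((i:ℕ):ℝ) / n)) (g (2 * Real.pi * ((j:ℕ):ℝ) / n))
      hT8 hv0 hvπ hlat (g_mem _).1 (g_mem _).2 (g_mem _).1 (g_mem _).2 hw
    have hd2 := dist_sq' (1 + (Real.pi ^ 2 / (12 * n) * (1 - 1 / (n : ℝ))) * g (2 * Real.pi * ((i:ℕ):ℝ) / n))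
      (1 + (Real.pi ^ 2 / (12 * n) * (1 - 1 / (n : ℝ))) * g (2 * Real.pi * ((j:ℕ):ℝ) / n))
      (2 * Real.pi * ((i:ℕ):ℝ) / n) (2 * Real.pi * ((j:ℕ):ℝ) / n)
    rw [hcos] at hd2
    rw [hz i, hz j]
    have hdn := dist_nonneg (x := ((1 + (Real.pi ^ 2 / (12 * n) * (1 - 1 / (n : ℝ))) *
          g (2 * Real.pi * ((i:ℕ) : ℝ) / n) : ℝ) : ℂ) *
        Complex.exp (((2 * Real.pi * ((i:ℕ) : ℝ) / n : ℝ) : ℂ) * Complex.I))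
      (y := ((1 + (Real.pi ^ 2 / (12 * n) * (1 - 1 / (n : ℝ))) *
          g (2 * Real.pi * ((j:ℕ) : ℝ) / n) : ℝ) : ℂ) *
        Complex.exp (((2 * Real.pi * ((j:ℕ) : ℝ) / n : ℝ) : ℂ) * Complex.I))
    nlinarith [hd2, hkey, hdn]
  · -- equality part
    intro k
    set k' : Fin n := ⟨((k : ℕ) + m) % n, Nat.mod_lt _ (by omega)⟩ with hk'
    have hgoal : ∀ θ : ℝ,
        (2 * Real.pi * ((k' : ℕ) : ℝ) / n) = θ + Real.pi ∨
        (2 * Real.pi * ((k' : ℕ) : ℝ) / n) = θ + Real.pi - 2*Real.pi →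
        θ = 2 * Real.pi * ((k : ℕ) : ℝ) / n →
        dist (z k) (z k') = 2 := by
      intro θ hor hθ
      have hgk' : g (2 * Real.pi * ((k' : ℕ) : ℝ) / n) = - g θ := by
        rcases hor with h1 | h1
        · rw [h1, g_add_pi]
        · rw [h1, show θ + Real.pi - 2*Real.pi = (θ + Real.pi) - 2*Real.pi by ring,
            g_sub_two_pi, g_add_pi]
      have hek' : Complex.exp (((2 * Real.pi * ((k' : ℕ) : ℝ) / n : ℝ):ℂ) * Complex.I)
          = - Complex.exp (((θ:ℝ):ℂ) * Complex.I) := by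
        rcases hor with h1 | h1
        · rw [h1]
          push_cast
          rw [show ((θ:ℂ) + ↑Real.pi) * Complex.I = (θ:ℂ)*Complex.I + ↑Real.pi*Complex.I by ring,
            Complex.exp_add, Complex.exp_pi_mul_I]
          ring
        · rw [h1]
          push_cast
          rw [show ((θ:ℂ) + ↑Real.pi - 2*↑Real.pi) * Complex.I
              = ((θ:ℂ)*Complex.I + ↑Real.pi*Complex.I) - 2*↑Real.pi*Complex.I by ring,
            Complex.exp_sub, Complex.exp_add, Complex.exp_pi_mul_I, Complex.exp_two_pi_mul_I]
          ring
      have hzz : z k - z k' = 2 * Complex.exp (((θ:ℝ):ℂ)*Complex.I) := by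
        rw [hz k, hz k', hgk', hek', ← hθ]
        push_cast
        ring
      rw [Complex.dist_eq, hzz, norm_mul]
      simp [Complex.norm_exp_ofReal_mul_I]
    rcases lt_or_ge ((k:ℕ) + m) n with hlt | hge
    · apply hgoal (2 * Real.pi * ((k:ℕ):ℝ)/n) _ rfl
      left
      have hkk : ((k':ℕ):ℝ) = ((k:ℕ):ℝ) + (m:ℝ) := by
        rw [hk']
        simp only []
        rw [Nat.mod_eq_of_lt hlt]
        push_cast
        ring
      rw [hkk]
      field_simp
      rw [hmn]
      ring
    · apply hgoal (2 * Real.pi * ((k:ℕ):ℝ)/n) _ rfl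
      right
      have hkm2n : (k:ℕ) + m < 2*n := by omega
      have hmod : ((k:ℕ) + m) % n = (k:ℕ) + m - n := by
        rw [Nat.mod_eq_sub_mod hge, Nat.mod_eq_of_lt (by omega)]
      have hkk : ((k':ℕ):ℝ) = ((k:ℕ):ℝ) + (m:ℝ) - (n:ℝ) := by
        rw [hk']
        simp only []
        rw [hmod]
        push_cast [hge]
        ring
      rw [hkk]
      field_simp
      rw [hmn]
      ring
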